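/- (Attainment of the truncated lower bound by the optimal test (3-4)–(3-5).) Define the test ⟨ψ*,φ*⟩ based on the sufficient statistic as follows: for each n and s, φ*_n picks (deterministically, say the smallest) an index j attaining min_{1≤j≤k} Σ_{i≠j} λ_{ij} g_{θ_i}^n(s) = u_n(s); ψ*_n(s) = 1 if u_n(s) ≤ g_{γϑ}^n(s) + (𝒥_{n+1}U_{n+1}^N)(s) and ψ*_n(s) = 0 otherwise, for n = 1,…,N−1, and ψ*_N ≡ 1. Then ψ* ∈ 𝒮^N and the Lagrangian L(ψ*,φ*) = Σ_{n=1}^N Σ_{x∈{0,1}^n} s_n^{ψ*}(x) [ n·f_{γϑ}^n(x) + Σ_{j=1}^k φ*_n{}^j(s_n(x)) Σ_{i≠j} λ_{ij} f_{θ_i}^n(x) ] equals 1 + U_1^N(0) + U_1^N(1), so ⟨ψ*,φ*⟩ minimizes the Lagrangian among all tests based on the sufficient statistic truncated at N. -/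

import Mathlib

open scoped BigOperators

/-- number of successes in the sample `x` -/
def count {n : ℕ} (x : Fin n → Bool) : ℕ := (Finset.univ.filter fun i => x i).card

/-- joint Bernoulli density `f_θ^n(x) = θ^{s_n(x)} (1-θ)^{n-s_n(x)}` -/
noncomputable def fpow (θ : ℝ) (n : ℕ) (x : Fin n → Bool) : ℝ :=
  θ ^ count x * (1 - θ) ^ (n - count x)

/-- binomial pmf `g_θ^n(s) = C(n,s) θ^s (1-θ)^{n-s}` -/
noncomputable def binom (θ : ℝ) (n s : ℕ) : ℝ :=
  (n.choose s : ℝ) * θ ^ s * (1 - θ) ^ (n - s)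

/-- `u_n(s) = min_{1≤j≤k} Σ_{i≠j} λ_{ij} g_{θ_i}^n(s)` -/
noncomputable def ufun (k : ℕ) (θs : Fin k → ℝ) (lam : Fin k → Fin k → ℝ)
    (n s : ℕ) : ℝ :=
  ⨅ j : Fin k, ∑ i ∈ Finset.univ.filter (· ≠ j), lam i j * binom (θs i) n s

/-- `f_{γϑ}^n(x) = Σ_i γ_i f_{ϑ_i}^n(x)` -/
noncomputable def fmix (K : ℕ) (γ ϑ : Fin K → ℝ) (n : ℕ) (x : Fin n → Bool) : ℝ :=
  ∑ i, γ i * fpow (ϑ i) n x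

/-- `g_{γϑ}^n(s) = Σ_i γ_i g_{ϑ_i}^n(s)` -/
noncomputable def gmix (K : ℕ) (γ ϑ : Fin K → ℝ) (n s : ℕ) : ℝ :=
  ∑ i, γ i * binom (ϑ i) n s

/-- the backward recursion `U_n^N`: `U_N^N = u_N` and
`U_{n}^N(s) = min{u_{n}(s), g_{γϑ}^{n}(s) + (𝒥_{n+1} U_{n+1}^N)(s)}` for `n < N`, where
`(𝒥_{n+1} U)(s) = U(s)·(n+1-s)/(n+1) + U(s+1)·(s+1)/(n+1)`. -/
noncomputable def U (k : ℕ) (θs : Fin k → ℝ) (lam : Fin k → Fin k → ℝ)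
    (K : ℕ) (γ ϑ : Fin K → ℝ) (N : ℕ) : ℕ → ℕ → ℝ :=
  fun n s =>
    if _h : n < N then
      min (ufun k θs lam n s)
        (gmix K γ ϑ n s +
          (U k θs lam K γ ϑ N (n + 1) s * ((n + 1 - s : ℕ) : ℝ) / (n + 1) +
            U k θs lam K γ ϑ N (n + 1) (s + 1) * ((s + 1 : ℕ) : ℝ) / (n + 1)))
    else ufun k θs lam n s
  termination_by n _s => N - n

/-- `s_m(x)`: number of successes among the first `m` coordinates of `x ∈ {0,1}^n` -/
def prefixCount {n : ℕ} (x : Fin n → Bool) (m : ℕ) : ℕ :=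
  (Finset.univ.filter fun i : Fin n => i.val < m ∧ x i).card

/-- `s_n^ψ(x) = (∏_{m=1}^{n-1} (1-ψ_m(s_m(x)))) · ψ_n(s_n(x))`, for a stopping rule `ψ`
based on the sufficient statistic -/
noncomputable def sstop (ψ : ℕ → ℕ → ℝ) (n : ℕ) (x : Fin n → Bool) : ℝ :=
  (∏ m ∈ Finset.range (n - 1), (1 - ψ (m + 1) (prefixCount x (m + 1)))) *
    ψ n (prefixCount x n)

/-- `ψ ∈ 𝒮^N`: the stopping rule is truncated at `N`. -/
def TruncatedAt (ψ : ℕ → ℕ → ℝ) (N : ℕ) : Prop :=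
  ∀ x : Fin N → Bool, ∏ n ∈ Finset.range N, (1 - ψ (n + 1) (prefixCount x (n + 1))) = 0

/-- the Lagrangian of a truncated test `⟨ψ,φ⟩` based on the sufficient statistic:
`L(ψ,φ) = Σ_{n=1}^N Σ_{x∈{0,1}^n} s_n^ψ(x)
  [ n·f_{γϑ}^n(x) + Σ_{j=1}^k φ_n^j(s_n(x)) Σ_{i≠j} λ_{ij} f_{θ_i}^n(x) ]`. -/
noncomputable def Lagr (k : ℕ) (θs : Fin k → ℝ) (lam : Fin k → Fin k → ℝ)
    (K : ℕ) (γ ϑ : Fin K → ℝ) (N : ℕ)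
    (ψ : ℕ → ℕ → ℝ) (φ : ℕ → ℕ → Fin k → ℝ) : ℝ :=
  ∑ n ∈ Finset.Icc 1 N, ∑ x : Fin n → Bool,
    sstop ψ n x *
      ((n : ℝ) * fmix K γ ϑ n x +
        ∑ j : Fin k, φ n (prefixCount x n) j *
          ∑ i ∈ Finset.univ.filter (· ≠ j), lam i j * fpow (θs i) n x)

open Classical in
/-- the optimal stopping rule (3-5): for `n = 1,…,N−1`, `ψ*_n(s) = 1` if
`u_n(s) ≤ g_{γϑ}^n(s) + (𝒥_{n+1}U_{n+1}^N)(s)` and `ψ*_n(s) = 0` otherwise, and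
`ψ*_N ≡ 1`. -/
noncomputable def psiStar (k : ℕ) (θs : Fin k → ℝ) (lam : Fin k → Fin k → ℝ)
    (K : ℕ) (γ ϑ : Fin K → ℝ) (N : ℕ) : ℕ → ℕ → ℝ :=
  fun n s =>
    if n < N then
      if ufun k θs lam n s ≤
          gmix K γ ϑ n s +
            (U k θs lam K γ ϑ N (n + 1) s * ((n + 1 - s : ℕ) : ℝ) / (n + 1) +
              U k θs lam K γ ϑ N (n + 1) (s + 1) * ((s + 1 : ℕ) : ℝ) / (n + 1)) then 1
      else 0
    else 1

/-! ### Auxiliary development -/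

section Aux

lemma count_le {n : ℕ} (x : Fin n → Bool) : count x ≤ n := by
  classical
  calc (Finset.univ.filter fun i => x i).card ≤ (Finset.univ : Finset (Fin n)).card :=
        Finset.card_filter_le _ _
    _ = n := by simp

lemma prefixCount_eq_count {n : ℕ} (x : Fin n → Bool) : prefixCount x n = count x := by
  unfold prefixCount count
  congr 1
  ext i
  simp [i.isLt]

lemma prefixCount_restrict {n m : ℕ} (h : m ≤ n) (x : Fin n → Bool) :
    prefixCount x m = count (fun j : Fin m => x (Fin.castLE h j)) := by
  unfold prefixCount count
  apply Finset.card_bij (fun (i : Fin n) hi =>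
    (⟨i.1, (Finset.mem_filter.mp hi).2.1⟩ : Fin m))
  · intro a ha
    simp only [Finset.mem_filter, Finset.mem_univ, true_and] at ha ⊢
    have : Fin.castLE h (⟨a.1, ha.1⟩ : Fin m) = a := by ext; rfl
    rw [this]
    exact ha.2
  · intro a ha b hb hab
    exact Fin.ext (by simpa using congrArg Fin.val hab)
  · intro b hb
    simp only [Finset.mem_filter, Finset.mem_univ, true_and] at hb ⊢
    exact ⟨Fin.castLE h b, ⟨b.isLt, hb⟩, rfl⟩

lemma count_snoc {n : ℕ} (x : Fin n → Bool) (b : Bool) :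
    count (Fin.snoc x b) = count x + (if b then 1 else 0) := by
  unfold count
  rw [Finset.card_filter, Finset.card_filter, Fin.sum_univ_castSucc]
  simp [Fin.snoc_castSucc, Fin.snoc_last]

lemma prefixCount_snoc {n m : ℕ} (h : m ≤ n) (x : Fin n → Bool) (b : Bool) :
    prefixCount (Fin.snoc x b) m = prefixCount x m := by
  rw [prefixCount_restrict (h.trans n.le_succ), prefixCount_restrict h]
  congr 1
  funext j
  have e : Fin.castLE (h.trans n.le_succ) j = Fin.castSucc (Fin.castLE h j) := Fin.ext rfl
  rw [e, Fin.snoc_castSucc]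

/-- `z : Fin N → Bool` extends `x : Fin n → Bool`. -/
def ExtT {n N : ℕ} (x : Fin n → Bool) (z : Fin N → Bool) : Prop :=
  ∀ (j : ℕ) (h1 : j < n) (h2 : j < N), z ⟨j, h2⟩ = x ⟨j, h1⟩

lemma ExtT.refl {n : ℕ} (x : Fin n → Bool) : ExtT x x := fun _ _ _ => rfl

lemma ExtT.of_snoc {n N : ℕ} {x : Fin n → Bool} {b : Bool} {z : Fin N → Bool}
    (hE : ExtT (Fin.snoc x b) z) : ExtT x z := by
  intro j h1 h2
  rw [hE j (Nat.lt_succ_of_lt h1) h2]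
  have e : (⟨j, Nat.lt_succ_of_lt h1⟩ : Fin (n+1)) = Fin.castSucc ⟨j, h1⟩ := Fin.ext rfl
  rw [e, Fin.snoc_castSucc]

lemma ExtT.prefixCount_eq {n N : ℕ} {x : Fin n → Bool} {z : Fin N → Bool} (hE : ExtT x z)
    {m : ℕ} (h : m ≤ n) (hN : n ≤ N) : prefixCount z m = prefixCount x m := by
  rw [prefixCount_restrict (h.trans hN), prefixCount_restrict h]
  congr 1
  funext j
  exact hE j.1 (lt_of_lt_of_le j.isLt h) _

end Aux
section Aux2

/-- per-path mixture density as a function of the sufficient statistic -/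
noncomputable def wmix (K : ℕ) (γ ϑ : Fin K → ℝ) (n s : ℕ) : ℝ :=
  ∑ i, γ i * (ϑ i ^ s * (1 - ϑ i) ^ (n - s))

/-- per-path decision loss of decision `j` -/
noncomputable def Df (k : ℕ) (θs : Fin k → ℝ) (lam : Fin k → Fin k → ℝ)
    (n s : ℕ) (j : Fin k) : ℝ :=
  ∑ i ∈ Finset.univ.filter (· ≠ j), lam i j * (θs i ^ s * (1 - θs i) ^ (n - s))

/-- per-path optimal stopping loss -/
noncomputable def vstop (k : ℕ) (θs : Fin k → ℝ) (lam : Fin k → Fin k → ℝ)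
    (n s : ℕ) : ℝ :=
  ⨅ j : Fin k, Df k θs lam n s j

/-- per-path version of the backward recursion -/
noncomputable def Vb (k : ℕ) (θs : Fin k → ℝ) (lam : Fin k → Fin k → ℝ)
    (K : ℕ) (γ ϑ : Fin K → ℝ) (N : ℕ) : ℕ → ℕ → ℝ :=
  fun n s =>
    if _h : n < N then
      min (vstop k θs lam n s)
        (wmix K γ ϑ n s +
          (Vb k θs lam K γ ϑ N (n + 1) s + Vb k θs lam K γ ϑ N (n + 1) (s + 1)))
    else vstop k θs lam n s
  termination_by n _s => N - n

lemma U_of_lt {k : ℕ} {θs : Fin k → ℝ} {lam : Fin k → Fin k → ℝ} {K : ℕ}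
    {γ ϑ : Fin K → ℝ} {N n s : ℕ} (h : n < N) :
    U k θs lam K γ ϑ N n s =
      min (ufun k θs lam n s)
        (gmix K γ ϑ n s +
          (U k θs lam K γ ϑ N (n + 1) s * ((n + 1 - s : ℕ) : ℝ) / (n + 1) +
            U k θs lam K γ ϑ N (n + 1) (s + 1) * ((s + 1 : ℕ) : ℝ) / (n + 1))) := by
  rw [U]
  simp only [dif_pos h]

lemma U_of_ge {k : ℕ} {θs : Fin k → ℝ} {lam : Fin k → Fin k → ℝ} {K : ℕ}
    {γ ϑ : Fin K → ℝ} {N n s : ℕ} (h : ¬ n < N) :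
    U k θs lam K γ ϑ N n s = ufun k θs lam n s := by
  rw [U]
  simp only [dif_neg h]

lemma Vb_of_lt {k : ℕ} {θs : Fin k → ℝ} {lam : Fin k → Fin k → ℝ} {K : ℕ}
    {γ ϑ : Fin K → ℝ} {N n s : ℕ} (h : n < N) :
    Vb k θs lam K γ ϑ N n s =
      min (vstop k θs lam n s)
        (wmix K γ ϑ n s +
          (Vb k θs lam K γ ϑ N (n + 1) s + Vb k θs lam K γ ϑ N (n + 1) (s + 1))) := by
  rw [Vb]
  simp only [dif_pos h]

lemma Vb_of_ge {k : ℕ} {θs : Fin k → ℝ} {lam : Fin k → Fin k → ℝ} {K : ℕ}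
    {γ ϑ : Fin K → ℝ} {N n s : ℕ} (h : ¬ n < N) :
    Vb k θs lam K γ ϑ N n s = vstop k θs lam n s := by
  rw [Vb]
  simp only [dif_neg h]

end Aux2
section Aux3

variable {k : ℕ} {θs : Fin k → ℝ} {lam : Fin k → Fin k → ℝ}
variable {K : ℕ} {γ ϑ : Fin K → ℝ} {N : ℕ}

lemma Dg_eq (n s : ℕ) (j : Fin k) :
    ∑ i ∈ Finset.univ.filter (· ≠ j), lam i j * binom (θs i) n s =
      (n.choose s : ℝ) * Df k θs lam n s j := by
  unfold Df binom
  rw [Finset.mul_sum]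
  apply Finset.sum_congr rfl
  intro i _
  ring

lemma ufun_eq (hk : 0 < k) (n s : ℕ) :
    ufun k θs lam n s = (n.choose s : ℝ) * vstop k θs lam n s := by
  haveI : Nonempty (Fin k) := ⟨⟨0, hk⟩⟩
  have hC : (0:ℝ) ≤ (n.choose s : ℝ) := Nat.cast_nonneg _
  obtain ⟨j0, hj0⟩ := Finite.exists_min (Df k θs lam n s)
  have hv : vstop k θs lam n s = Df k θs lam n s j0 :=
    le_antisymm (ciInf_le ((Set.finite_range _).bddBelow) j0) (le_ciInf hj0)
  apply le_antisymm
  · calc ufun k θs lam n s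
        ≤ ∑ i ∈ Finset.univ.filter (· ≠ j0), lam i j0 * binom (θs i) n s :=
          ciInf_le ((Set.finite_range _).bddBelow) j0
      _ = (n.choose s : ℝ) * vstop k θs lam n s := by rw [Dg_eq, hv]
  · apply le_ciInf
    intro j
    rw [Dg_eq, hv]
    exact mul_le_mul_of_nonneg_left (hj0 j) hC

lemma gmix_eq (n s : ℕ) :
    gmix K γ ϑ n s = (n.choose s : ℝ) * wmix K γ ϑ n s := by
  unfold gmix wmix binom
  rw [Finset.mul_sum]
  apply Finset.sum_congr rfl
  intro i _
  ring

lemma Jcast {n s : ℕ} (a b : ℝ)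
    (ha : U k θs lam K γ ϑ N (n + 1) s = ((n+1).choose s : ℝ) * a)
    (hb : U k θs lam K γ ϑ N (n + 1) (s + 1) = ((n+1).choose (s+1) : ℝ) * b) :
    gmix K γ ϑ n s +
      (U k θs lam K γ ϑ N (n + 1) s * ((n + 1 - s : ℕ) : ℝ) / (n + 1) +
        U k θs lam K γ ϑ N (n + 1) (s + 1) * ((s + 1 : ℕ) : ℝ) / (n + 1)) =
    (n.choose s : ℝ) * (wmix K γ ϑ n s + (a + b)) := by
  rw [ha, hb, gmix_eq]
  have key1 : ((n+1).choose s : ℝ) * ((n + 1 - s : ℕ) : ℝ) = (n.choose s : ℝ) * ((n : ℝ) + 1) := by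
    have h1 : (n+1).choose s * (n + 1 - s) = n.choose s * (n + 1) := by
      rw [← Nat.choose_succ_right_eq]
      rw [← Nat.add_one_mul_choose_eq]
      ring
    exact_mod_cast congrArg (Nat.cast : ℕ → ℝ) h1
  have key2 : ((n+1).choose (s+1) : ℝ) * ((s + 1 : ℕ) : ℝ) = (n.choose s : ℝ) * ((n : ℝ) + 1) := by
    have h2 : (n+1).choose (s+1) * (s + 1) = n.choose s * (n + 1) := by
      rw [← Nat.add_one_mul_choose_eq]
      ring
    exact_mod_cast congrArg (Nat.cast : ℕ → ℝ) h2
  have hne : ((n : ℝ) + 1) ≠ 0 := by positivity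
  have e1 : ((n+1).choose s : ℝ) * a * ((n + 1 - s : ℕ) : ℝ) / ((n : ℝ) + 1)
      = (n.choose s : ℝ) * a := by
    field_simp
    linear_combination a * key1
  have e2 : ((n+1).choose (s+1) : ℝ) * b * ((s + 1 : ℕ) : ℝ) / ((n : ℝ) + 1)
      = (n.choose s : ℝ) * b := by
    push_cast at key2 ⊢
    field_simp
    linear_combination b * key2
  rw [e1, e2]
  ring

lemma U_eq (hk : 0 < k) :
    ∀ m n s : ℕ, N ≤ n + m →
      U k θs lam K γ ϑ N n s = (n.choose s : ℝ) * Vb k θs lam K γ ϑ N n s := by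
  intro m
  induction m with
  | zero =>
    intro n s hm
    have h : ¬ n < N := by omega
    rw [U_of_ge h, Vb_of_ge h, ufun_eq hk]
  | succ m ih =>
    intro n s hm
    by_cases h : n < N
    · rw [U_of_lt h, Vb_of_lt h, ufun_eq hk,
        Jcast _ _ (ih (n+1) s (by omega)) (ih (n+1) (s+1) (by omega))]
      exact ((monotone_mul_left_of_nonneg (Nat.cast_nonneg _)).map_min).symm
    · rw [U_of_ge h, Vb_of_ge h, ufun_eq hk]

end Aux3
section Aux4

variable {k : ℕ} {θs : Fin k → ℝ} {lam : Fin k → Fin k → ℝ}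
variable {K : ℕ} {γ ϑ : Fin K → ℝ} {N : ℕ}

lemma fpow_nonneg {θ : ℝ} (hθ : θ ∈ Set.Icc (0:ℝ) 1) (n : ℕ) (x : Fin n → Bool) :
    0 ≤ fpow θ n x :=
  mul_nonneg (pow_nonneg hθ.1 _) (pow_nonneg (by linarith [hθ.2]) _)

lemma fpow_snoc {θ : ℝ} (n : ℕ) (x : Fin n → Bool) :
    fpow θ (n+1) (Fin.snoc x false) + fpow θ (n+1) (Fin.snoc x true) = fpow θ n x := by
  unfold fpow
  rw [count_snoc, count_snoc]
  have hc := count_le x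
  simp only [Bool.false_eq_true, if_false, if_true, add_zero]
  have h1 : n + 1 - count x = (n - count x) + 1 := by omega
  have h2 : n + 1 - (count x + 1) = n - count x := by omega
  rw [h1, h2, pow_succ, pow_succ]
  ring

lemma fmix_eq_wmix (n : ℕ) (x : Fin n → Bool) :
    fmix K γ ϑ n x = wmix K γ ϑ n (count x) := rfl

lemma fmix_snoc (n : ℕ) (x : Fin n → Bool) :
    fmix K γ ϑ (n+1) (Fin.snoc x false) + fmix K γ ϑ (n+1) (Fin.snoc x true)
      = fmix K γ ϑ n x := by
  unfold fmix
  rw [← Finset.sum_add_distrib]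
  apply Finset.sum_congr rfl
  intro i _
  rw [← mul_add, fpow_snoc]

lemma fmix_nonneg (hγ : ∀ i, 0 ≤ γ i) (hϑ : ∀ i, ϑ i ∈ Set.Icc (0:ℝ) 1)
    (n : ℕ) (x : Fin n → Bool) : 0 ≤ fmix K γ ϑ n x :=
  Finset.sum_nonneg fun i _ => mul_nonneg (hγ i) (fpow_nonneg (hϑ i) n x)

/-- the per-stage cost of stopping at time `n` at data `x` -/
noncomputable def cost (k : ℕ) (θs : Fin k → ℝ) (lam : Fin k → Fin k → ℝ)
    (K : ℕ) (γ ϑ : Fin K → ℝ) (φ : ℕ → ℕ → Fin k → ℝ) (n : ℕ) (x : Fin n → Bool) : ℝ :=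
  (n : ℝ) * fmix K γ ϑ n x +
    ∑ j : Fin k, φ n (count x) j *
      ∑ i ∈ Finset.univ.filter (· ≠ j), lam i j * fpow (θs i) n x

lemma Df_eq_sum (n : ℕ) (x : Fin n → Bool) (j : Fin k) :
    ∑ i ∈ Finset.univ.filter (· ≠ j), lam i j * fpow (θs i) n x
      = Df k θs lam n (count x) j := rfl

/-- the value of the subtree rooted at `x`, under stopping rule `ψ` and decision rule `φ` -/
noncomputable def Atail (k : ℕ) (θs : Fin k → ℝ) (lam : Fin k → Fin k → ℝ)
    (K : ℕ) (γ ϑ : Fin K → ℝ) (N : ℕ) (ψ : ℕ → ℕ → ℝ) (φ : ℕ → ℕ → Fin k → ℝ) :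
    (n : ℕ) → (Fin n → Bool) → ℝ :=
  fun n x =>
    ψ n (count x) * cost k θs lam K γ ϑ φ n x +
      (if _h : n < N then
        (1 - ψ n (count x)) *
          (Atail k θs lam K γ ϑ N ψ φ (n+1) (Fin.snoc x false) +
            Atail k θs lam K γ ϑ N ψ φ (n+1) (Fin.snoc x true))
      else 0)
  termination_by n _x => N - n

lemma Atail_of_lt {ψ : ℕ → ℕ → ℝ} {φ : ℕ → ℕ → Fin k → ℝ} {n : ℕ} (h : n < N)
    (x : Fin n → Bool) :
    Atail k θs lam K γ ϑ N ψ φ n x =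
      ψ n (count x) * cost k θs lam K γ ϑ φ n x +
        (1 - ψ n (count x)) *
          (Atail k θs lam K γ ϑ N ψ φ (n+1) (Fin.snoc x false) +
            Atail k θs lam K γ ϑ N ψ φ (n+1) (Fin.snoc x true)) := by
  rw [Atail]
  simp only [dif_pos h]

lemma Atail_of_ge {ψ : ℕ → ℕ → ℝ} {φ : ℕ → ℕ → Fin k → ℝ} {n : ℕ} (h : ¬ n < N)
    (x : Fin n → Bool) :
    Atail k θs lam K γ ϑ N ψ φ n x = ψ n (count x) * cost k θs lam K γ ϑ φ n x := by
  rw [Atail]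
  simp only [dif_neg h, add_zero]

/-- the probability of not having stopped before time `n` -/
noncomputable def pre (ψ : ℕ → ℕ → ℝ) (n : ℕ) (x : Fin n → Bool) : ℝ :=
  ∏ m ∈ Finset.range (n - 1), (1 - ψ (m + 1) (prefixCount x (m + 1)))

lemma sstop_eq (ψ : ℕ → ℕ → ℝ) (n : ℕ) (x : Fin n → Bool) :
    sstop ψ n x = pre ψ n x * ψ n (count x) := by
  unfold sstop pre
  rw [prefixCount_eq_count]

lemma pre_snoc (ψ : ℕ → ℕ → ℝ) {n : ℕ} (x : Fin (n+1) → Bool) (b : Bool) :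
    pre ψ (n+2) (Fin.snoc x b) = pre ψ (n+1) x * (1 - ψ (n+1) (count x)) := by
  unfold pre
  have e1 : n + 2 - 1 = n + 1 := by omega
  have e2 : n + 1 - 1 = n := by omega
  rw [e1, e2, Finset.prod_range_succ]
  congr 1
  · apply Finset.prod_congr rfl
    intro m hm
    rw [prefixCount_snoc (by have := Finset.mem_range.mp hm; omega) x b]
  · rw [prefixCount_snoc (le_refl (n+1)) x b, prefixCount_eq_count]

lemma le_cost (hk : 0 < k)
    {φ : ℕ → ℕ → Fin k → ℝ} {n : ℕ} {x : Fin n → Bool}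
    (hφ : ∀ j, φ n (count x) j ∈ Set.Icc (0:ℝ) 1)
    (hφ1 : ∑ j, φ n (count x) j = 1) :
    (n : ℝ) * fmix K γ ϑ n x + vstop k θs lam n (count x) ≤ cost k θs lam K γ ϑ φ n x := by
  haveI : Nonempty (Fin k) := ⟨⟨0, hk⟩⟩
  unfold cost
  apply add_le_add le_rfl
  calc vstop k θs lam n (count x)
      = ∑ j : Fin k, φ n (count x) j * vstop k θs lam n (count x) := by
        rw [← Finset.sum_mul, hφ1, one_mul]
    _ ≤ ∑ j : Fin k, φ n (count x) j *
          ∑ i ∈ Finset.univ.filter (· ≠ j), lam i j * fpow (θs i) n x := by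
        apply Finset.sum_le_sum
        intro j _
        rw [Df_eq_sum]
        exact mul_le_mul_of_nonneg_left
          (ciInf_le ((Set.finite_range _).bddBelow) j) (hφ j).1

lemma cost_opt (hk : 0 < k)
    {φs : ℕ → ℕ → Fin k → ℝ}
    (hφs : ∀ n s : ℕ, ∃ j : Fin k,
      (∑ i ∈ Finset.univ.filter (· ≠ j), lam i j * binom (θs i) n s =
          ufun k θs lam n s) ∧
        ∀ j' : Fin k, φs n s j' = if j' = j then 1 else 0)
    (n : ℕ) (x : Fin n → Bool) :
    cost k θs lam K γ ϑ φs n x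
      = (n : ℝ) * fmix K γ ϑ n x + vstop k θs lam n (count x) := by
  obtain ⟨j0, hval, hind⟩ := hφs n (count x)
  have hC : (0:ℝ) < (n.choose (count x) : ℝ) := by
    exact_mod_cast Nat.choose_pos (count_le x)
  have hDf : Df k θs lam n (count x) j0 = vstop k θs lam n (count x) := by
    rw [Dg_eq, ufun_eq hk] at hval
    exact mul_left_cancel₀ (ne_of_gt hC) hval
  unfold cost
  congr 1
  calc ∑ j : Fin k, φs n (count x) j *
        ∑ i ∈ Finset.univ.filter (· ≠ j), lam i j * fpow (θs i) n x
      = ∑ j : Fin k, (if j = j0 then Df k θs lam n (count x) j else 0) := by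
        apply Finset.sum_congr rfl
        intro j _
        rw [Df_eq_sum, hind j, ite_mul, one_mul, zero_mul]
    _ = Df k θs lam n (count x) j0 := by
        rw [Finset.sum_ite_eq' Finset.univ j0]
        simp
    _ = vstop k θs lam n (count x) := hDf

end Aux4
section Aux5

variable {k : ℕ} {θs : Fin k → ℝ} {lam : Fin k → Fin k → ℝ}
variable {K : ℕ} {γ ϑ : Fin K → ℝ} {N : ℕ}

lemma sum_snoc_split (n : ℕ) (F : (Fin (n+1) → Bool) → ℝ) :
    ∑ z : Fin (n+1) → Bool, F z
      = ∑ x : Fin n → Bool, (F (Fin.snoc x false) + F (Fin.snoc x true)) := by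
  rw [← (Fin.snocEquiv (fun _ => Bool)).sum_comp F]
  rw [Fintype.sum_prod_type]
  rw [Finset.sum_comm]
  apply Finset.sum_congr rfl
  intro x _
  have hb : ∀ G : Bool → ℝ, ∑ b : Bool, G b = G false + G true := fun G => by simp [add_comm]
  rw [hb]
  rfl

lemma lagr_split (ψ : ℕ → ℕ → ℝ) (φ : ℕ → ℕ → Fin k → ℝ) :
    ∀ m n : ℕ, 1 ≤ n → n + m = N →
      (∑ l ∈ Finset.Icc n N, ∑ y : Fin l → Bool,
          sstop ψ l y * cost k θs lam K γ ϑ φ l y)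
        = ∑ x : Fin n → Bool, pre ψ n x * Atail k θs lam K γ ϑ N ψ φ n x := by
  intro m
  induction m with
  | zero =>
    intro n hn h1
    have hnN : n = N := by omega
    subst hnN
    rw [Finset.Icc_self, Finset.sum_singleton]
    apply Finset.sum_congr rfl
    intro y _
    rw [sstop_eq, Atail_of_ge (lt_irrefl n)]
    ring
  | succ m ih =>
    intro n hn h1
    have hnN : n < N := by omega
    have hsplit : Finset.Icc n N = insert n (Finset.Icc (n+1) N) := by
      rw [Finset.Icc_add_one_left_eq_Ioc, Finset.Ioc_insert_left (by omega : n ≤ N)]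
    rw [hsplit, Finset.sum_insert (by simp)]
    rw [ih (n+1) (by omega) (by omega)]
    obtain ⟨n', rfl⟩ : ∃ n', n = n' + 1 := ⟨n - 1, by omega⟩
    rw [sum_snoc_split (n'+1)
      (fun z => pre ψ (n'+2) z * Atail k θs lam K γ ϑ N ψ φ (n'+2) z)]
    rw [← Finset.sum_add_distrib]
    apply Finset.sum_congr rfl
    intro x _
    rw [sstop_eq, Atail_of_lt hnN, pre_snoc, pre_snoc]
    ring

end Aux5
section Aux6

variable {k : ℕ} {θs : Fin k → ℝ} {lam : Fin k → Fin k → ℝ}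
variable {K : ℕ} {γ ϑ : Fin K → ℝ} {N : ℕ}

lemma lowerB (hk : 0 < k)
    {ψ : ℕ → ℕ → ℝ} {φ : ℕ → ℕ → Fin k → ℝ}
    (hψ : ∀ n s, ψ n s ∈ Set.Icc (0:ℝ) 1)
    (hφ : ∀ n s j, φ n s j ∈ Set.Icc (0:ℝ) 1)
    (hφ1 : ∀ n s, ∑ j, φ n s j = 1) :
    ∀ m n : ℕ, n + m = N → ∀ x : Fin n → Bool,
      (∀ z : Fin N → Bool, ExtT x z →
        ∏ l ∈ Finset.Icc n N, (1 - ψ l (prefixCount z l)) = 0) →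
      (n : ℝ) * fmix K γ ϑ n x + Vb k θs lam K γ ϑ N n (count x)
        ≤ Atail k θs lam K γ ϑ N ψ φ n x := by
  intro m
  induction m with
  | zero =>
    intro n h1 x hyp
    have hnN : n = N := by omega
    subst hnN
    have h0 := hyp x (ExtT.refl x)
    rw [Finset.Icc_self, Finset.prod_singleton, prefixCount_eq_count] at h0
    have hone : ψ n (count x) = 1 := by linarith [sub_eq_zero.mp h0]
    rw [Atail_of_ge (lt_irrefl n), hone, one_mul, Vb_of_ge (lt_irrefl n)]
    exact le_cost hk (fun j => hφ n (count x) j) (hφ1 n (count x))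
  | succ m ih =>
    intro n h1 x hyp
    have hnN : n < N := by omega
    have hp0 : 0 ≤ ψ n (count x) := (hψ n (count x)).1
    have hp1 : ψ n (count x) ≤ 1 := (hψ n (count x)).2
    have hcost := le_cost (θs := θs) (lam := lam) (γ := γ) (ϑ := ϑ) hk
      (fun j => hφ n (count x) j) (hφ1 n (count x))
    have hmin1 : Vb k θs lam K γ ϑ N n (count x) ≤ vstop k θs lam n (count x) := by
      rw [Vb_of_lt hnN]; exact min_le_left _ _
    rw [Atail_of_lt hnN]
    by_cases hone : ψ n (count x) = 1
    · rw [hone]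
      simp only [sub_self, zero_mul, add_zero, one_mul]
      calc (n : ℝ) * fmix K γ ϑ n x + Vb k θs lam K γ ϑ N n (count x)
          ≤ (n : ℝ) * fmix K γ ϑ n x + vstop k θs lam n (count x) := by linarith
        _ ≤ _ := hcost
    · -- pass the truncation hypothesis to the children
      have hchild : ∀ b : Bool, ∀ z : Fin N → Bool, ExtT (Fin.snoc x b) z →
          ∏ l ∈ Finset.Icc (n+1) N, (1 - ψ l (prefixCount z l)) = 0 := by
        intro b z hE
        have h0 := hyp z (hE.of_snoc)
        have hsplit : Finset.Icc n N = insert n (Finset.Icc (n+1) N) := by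
          rw [Finset.Icc_add_one_left_eq_Ioc, Finset.Ioc_insert_left (by omega : n ≤ N)]
        rw [hsplit, Finset.prod_insert (by simp)] at h0
        rcases mul_eq_zero.mp h0 with h | h
        · exfalso
          apply hone
          rw [hE.of_snoc.prefixCount_eq (le_refl n) (by omega), prefixCount_eq_count] at h
          linarith [sub_eq_zero.mp h]
        · exact h
      have hA0 := ih (n+1) (by omega) (Fin.snoc x false) (hchild false)
      have hA1 := ih (n+1) (by omega) (Fin.snoc x true) (hchild true)
      rw [count_snoc] at hA0 hA1
      simp only [Bool.false_eq_true, if_false, if_true, add_zero] at hA0 hA1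
      have hfs := fmix_snoc (K := K) (γ := γ) (ϑ := ϑ) n x
      have hmin2 : Vb k θs lam K γ ϑ N n (count x) ≤
          wmix K γ ϑ n (count x) +
            (Vb k θs lam K γ ϑ N (n+1) (count x) + Vb k θs lam K γ ϑ N (n+1) (count x + 1)) := by
        rw [Vb_of_lt hnN]; exact min_le_right _ _
      have hw : fmix K γ ϑ n x = wmix K γ ϑ n (count x) := fmix_eq_wmix n x
      have e1 : ψ n (count x) * ((n : ℝ) * fmix K γ ϑ n x + vstop k θs lam n (count x))
          ≤ ψ n (count x) * cost k θs lam K γ ϑ φ n x :=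
        mul_le_mul_of_nonneg_left hcost hp0
      have e2 : (1 - ψ n (count x)) *
            (((n+1 : ℕ) : ℝ) * fmix K γ ϑ (n+1) (Fin.snoc x false)
              + Vb k θs lam K γ ϑ N (n+1) (count x)
              + (((n+1 : ℕ) : ℝ) * fmix K γ ϑ (n+1) (Fin.snoc x true)
                + Vb k θs lam K γ ϑ N (n+1) (count x + 1)))
          ≤ (1 - ψ n (count x)) *
            (Atail k θs lam K γ ϑ N ψ φ (n+1) (Fin.snoc x false) +
              Atail k θs lam K γ ϑ N ψ φ (n+1) (Fin.snoc x true)) := by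
        apply mul_le_mul_of_nonneg_left _ (by linarith)
        exact add_le_add hA0 hA1
      have hv1 : ψ n (count x) * Vb k θs lam K γ ϑ N n (count x)
          ≤ ψ n (count x) * vstop k θs lam n (count x) :=
        mul_le_mul_of_nonneg_left hmin1 hp0
      have hv2 : (1 - ψ n (count x)) * Vb k θs lam K γ ϑ N n (count x)
          ≤ (1 - ψ n (count x)) *
            (wmix K γ ϑ n (count x) +
              (Vb k θs lam K γ ϑ N (n+1) (count x) + Vb k θs lam K γ ϑ N (n+1) (count x + 1))) :=
        mul_le_mul_of_nonneg_left hmin2 (by linarith)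
      push_cast at e2
      calc (n : ℝ) * fmix K γ ϑ n x + Vb k θs lam K γ ϑ N n (count x)
          = ψ n (count x) * ((n : ℝ) * fmix K γ ϑ n x + Vb k θs lam K γ ϑ N n (count x))
            + (1 - ψ n (count x)) * ((n : ℝ) * fmix K γ ϑ n x + Vb k θs lam K γ ϑ N n (count x)) := by
            ring
        _ ≤ ψ n (count x) * ((n : ℝ) * fmix K γ ϑ n x + vstop k θs lam n (count x))
            + (1 - ψ n (count x)) * ((n : ℝ) * fmix K γ ϑ n x +
                (wmix K γ ϑ n (count x) +
                  (Vb k θs lam K γ ϑ N (n+1) (count x) + Vb k θs lam K γ ϑ N (n+1) (count x + 1)))) := by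
            apply add_le_add
            · exact mul_le_mul_of_nonneg_left (by linarith) hp0
            · exact mul_le_mul_of_nonneg_left (by linarith) (by linarith)
        _ = ψ n (count x) * ((n : ℝ) * fmix K γ ϑ n x + vstop k θs lam n (count x))
            + (1 - ψ n (count x)) *
              (((n : ℝ) + 1) * fmix K γ ϑ (n + 1) (Fin.snoc x false)
                + Vb k θs lam K γ ϑ N (n+1) (count x)
                + (((n : ℝ) + 1) * fmix K γ ϑ (n + 1) (Fin.snoc x true)
                  + Vb k θs lam K γ ϑ N (n+1) (count x + 1))) := by
            congr 1
            apply congrArg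
            linear_combination ((n : ℝ) + 1) * hfs.symm - hw
        _ ≤ _ := add_le_add e1 e2

end Aux6
section Aux7

variable {k : ℕ} {θs : Fin k → ℝ} {lam : Fin k → Fin k → ℝ}
variable {K : ℕ} {γ ϑ : Fin K → ℝ} {N : ℕ}

lemma psiStar_of_ge {n s : ℕ} (h : ¬ n < N) : psiStar k θs lam K γ ϑ N n s = 1 := by
  unfold psiStar
  rw [if_neg h]

open Classical in
lemma psiStar_of_lt {n s : ℕ} (h : n < N) :
    psiStar k θs lam K γ ϑ N n s =
      if ufun k θs lam n s ≤
          gmix K γ ϑ n s +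
            (U k θs lam K γ ϑ N (n + 1) s * ((n + 1 - s : ℕ) : ℝ) / (n + 1) +
              U k θs lam K γ ϑ N (n + 1) (s + 1) * ((s + 1 : ℕ) : ℝ) / (n + 1)) then 1
      else 0 := by
  unfold psiStar
  rw [if_pos h]

lemma optEq (hk : 0 < k)
    {φs : ℕ → ℕ → Fin k → ℝ}
    (hφs : ∀ n s : ℕ, ∃ j : Fin k,
      (∑ i ∈ Finset.univ.filter (· ≠ j), lam i j * binom (θs i) n s =
          ufun k θs lam n s) ∧
        ∀ j' : Fin k, φs n s j' = if j' = j then 1 else 0) :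
    ∀ m n : ℕ, n + m = N → ∀ x : Fin n → Bool,
      Atail k θs lam K γ ϑ N (psiStar k θs lam K γ ϑ N) φs n x
        = (n : ℝ) * fmix K γ ϑ n x + Vb k θs lam K γ ϑ N n (count x) := by
  intro m
  induction m with
  | zero =>
    intro n h1 x
    have hnN : ¬ n < N := by omega
    rw [Atail_of_ge hnN, psiStar_of_ge hnN, one_mul, cost_opt hk hφs, Vb_of_ge hnN]
  | succ m ih =>
    intro n h1 x
    have hnN : n < N := by omega
    have hC : (0:ℝ) < (n.choose (count x) : ℝ) := by
      exact_mod_cast Nat.choose_pos (count_le x)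
    -- translate the `U`-level comparison to the per-path level
    have hUeq : gmix K γ ϑ n (count x) +
        (U k θs lam K γ ϑ N (n + 1) (count x) * ((n + 1 - count x : ℕ) : ℝ) / (n + 1) +
          U k θs lam K γ ϑ N (n + 1) (count x + 1) * ((count x + 1 : ℕ) : ℝ) / (n + 1))
        = (n.choose (count x) : ℝ) *
          (wmix K γ ϑ n (count x) +
            (Vb k θs lam K γ ϑ N (n+1) (count x) + Vb k θs lam K γ ϑ N (n+1) (count x + 1))) :=
      Jcast _ _ (U_eq hk (N - n) (n+1) (count x) (by omega))
        (U_eq hk (N - n) (n+1) (count x + 1) (by omega))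
    have hcond : (ufun k θs lam n (count x) ≤
        gmix K γ ϑ n (count x) +
          (U k θs lam K γ ϑ N (n + 1) (count x) * ((n + 1 - count x : ℕ) : ℝ) / (n + 1) +
            U k θs lam K γ ϑ N (n + 1) (count x + 1) * ((count x + 1 : ℕ) : ℝ) / (n + 1)))
        ↔ vstop k θs lam n (count x) ≤
            wmix K γ ϑ n (count x) +
              (Vb k θs lam K γ ϑ N (n+1) (count x) + Vb k θs lam K γ ϑ N (n+1) (count x + 1)) := by
      rw [ufun_eq hk, hUeq]
      exact mul_le_mul_iff_right₀ hC
    rw [Atail_of_lt hnN, psiStar_of_lt hnN]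
    by_cases hle : ufun k θs lam n (count x) ≤
        gmix K γ ϑ n (count x) +
          (U k θs lam K γ ϑ N (n + 1) (count x) * ((n + 1 - count x : ℕ) : ℝ) / (n + 1) +
            U k θs lam K γ ϑ N (n + 1) (count x + 1) * ((count x + 1 : ℕ) : ℝ) / (n + 1))
    · rw [if_pos hle]
      simp only [one_mul, sub_self, zero_mul, add_zero]
      rw [cost_opt hk hφs, Vb_of_lt hnN, min_eq_left (hcond.mp hle)]
    · rw [if_neg hle]
      simp only [zero_mul, sub_zero, one_mul, zero_add]
      rw [ih (n+1) (by omega) (Fin.snoc x false), ih (n+1) (by omega) (Fin.snoc x true)]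
      rw [count_snoc, count_snoc]
      simp only [Bool.false_eq_true, if_false, if_true, add_zero]
      have hfs := fmix_snoc (K := K) (γ := γ) (ϑ := ϑ) n x
      have hw : fmix K γ ϑ n x = wmix K γ ϑ n (count x) := fmix_eq_wmix n x
      have hVb : Vb k θs lam K γ ϑ N n (count x)
          = wmix K γ ϑ n (count x) +
            (Vb k θs lam K γ ϑ N (n+1) (count x) + Vb k θs lam K γ ϑ N (n+1) (count x + 1)) := by
        rw [Vb_of_lt hnN]
        apply min_eq_right
        have := (not_iff_not.mpr hcond).mp hle
        linarith [lt_of_not_ge this]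
      rw [hVb]
      push_cast
      linear_combination ((n : ℝ) + 1) * hfs + hw
  
end Aux7
section Aux8

variable {k : ℕ} {θs : Fin k → ℝ} {lam : Fin k → Fin k → ℝ}
variable {K : ℕ} {γ ϑ : Fin K → ℝ} {N : ℕ}

lemma Lagr_eq (hN : 1 ≤ N) (ψ : ℕ → ℕ → ℝ) (φ : ℕ → ℕ → Fin k → ℝ) :
    Lagr k θs lam K γ ϑ N ψ φ
      = ∑ x : Fin 1 → Bool, Atail k θs lam K γ ϑ N ψ φ 1 x := by
  have h := lagr_split (k := k) (θs := θs) (lam := lam) (K := K) (γ := γ) (ϑ := ϑ) (N := N)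
    ψ φ (N - 1) 1 le_rfl (by omega)
  calc Lagr k θs lam K γ ϑ N ψ φ
      = ∑ l ∈ Finset.Icc 1 N, ∑ y : Fin l → Bool,
          sstop ψ l y * cost k θs lam K γ ϑ φ l y := by
        unfold Lagr
        apply Finset.sum_congr rfl
        intro n _
        apply Finset.sum_congr rfl
        intro x _
        congr 1
        rw [prefixCount_eq_count]
        rfl
    _ = ∑ x : Fin 1 → Bool, pre ψ 1 x * Atail k θs lam K γ ϑ N ψ φ 1 x := h
    _ = ∑ x : Fin 1 → Bool, Atail k θs lam K γ ϑ N ψ φ 1 x := by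
        apply Finset.sum_congr rfl
        intro x _
        unfold pre
        simp

lemma sum_fin1 (F : (Fin 1 → Bool) → ℝ) :
    ∑ x : Fin 1 → Bool, F x = F (fun _ => false) + F (fun _ => true) := by
  rw [← Equiv.sum_comp (Equiv.funUnique (Fin 1) Bool).symm F]
  have hb : ∀ G : Bool → ℝ, ∑ b : Bool, G b = G false + G true := fun G => by
    simp [add_comm]
  rw [hb]
  rfl

lemma count_const_false : count (fun _ : Fin 1 => false) = 0 := by
  simp [count]

lemma count_const_true : count (fun _ : Fin 1 => true) = 1 := by
  simp [count]

lemma wmix_one (hγ1 : ∑ i, γ i = 1) : wmix K γ ϑ 1 0 + wmix K γ ϑ 1 1 = 1 := by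
  unfold wmix
  rw [← Finset.sum_add_distrib]
  have hterm : ∀ i ∈ (Finset.univ : Finset (Fin K)),
      γ i * (ϑ i ^ (0:ℕ) * (1 - ϑ i) ^ (1 - 0 : ℕ)) + γ i * (ϑ i ^ (1:ℕ) * (1 - ϑ i) ^ (1 - 1 : ℕ))
        = γ i := by
    intro i _
    norm_num
    ring
  rw [Finset.sum_congr rfl hterm, hγ1]

lemma prod_Icc_one (f : ℕ → ℝ) :
    ∏ l ∈ Finset.Icc 1 N, f l = ∏ m ∈ Finset.range N, f (m + 1) := by
  rw [← Finset.Ico_add_one_right_eq_Icc, Finset.prod_Ico_eq_prod_range]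
  apply Finset.prod_congr (by norm_num)
  intro m _
  rw [Nat.add_comm]

end Aux8
/-- **Attainment of the truncated lower bound by the optimal test (3-4)–(3-5)**: if
`φ*` deterministically picks, for each `n` and `s`, an index `j` attaining
`min_{1≤j≤k} Σ_{i≠j} λ_{ij} g_{θ_i}^n(s) = u_n(s)`, and `ψ*` is the stopping rule
`psiStar` above, then `ψ* ∈ 𝒮^N`, the Lagrangian `L(ψ*,φ*)` equals
`1 + U_1^N(0) + U_1^N(1)`, and hence `⟨ψ*,φ*⟩` minimizes the Lagrangian among all
tests based on the sufficient statistic truncated at `N`. -/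
theorem stmt15 (k : ℕ) (hk : 2 ≤ k) (θs : Fin k → ℝ)
    (hθ : ∀ i, θs i ∈ Set.Icc (0 : ℝ) 1)
    (lam : Fin k → Fin k → ℝ) (hlam : ∀ i j, 0 ≤ lam i j)
    (K : ℕ) (hK : 1 ≤ K) (γ ϑ : Fin K → ℝ)
    (hγ : ∀ i, 0 ≤ γ i) (hγ1 : ∑ i, γ i = 1)
    (hϑ : ∀ i, ϑ i ∈ Set.Icc (0 : ℝ) 1)
    (N : ℕ) (hN : 2 ≤ N)
    (φs : ℕ → ℕ → Fin k → ℝ)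
    (hφs : ∀ n s : ℕ, ∃ j : Fin k,
      (∑ i ∈ Finset.univ.filter (· ≠ j), lam i j * binom (θs i) n s =
          ufun k θs lam n s) ∧
        ∀ j' : Fin k, φs n s j' = if j' = j then 1 else 0) :
    TruncatedAt (psiStar k θs lam K γ ϑ N) N ∧
      Lagr k θs lam K γ ϑ N (psiStar k θs lam K γ ϑ N) φs =
        1 + U k θs lam K γ ϑ N 1 0 + U k θs lam K γ ϑ N 1 1 ∧
      ∀ (ψ : ℕ → ℕ → ℝ) (φ : ℕ → ℕ → Fin k → ℝ),
        (∀ n s, ψ n s ∈ Set.Icc (0 : ℝ) 1) →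
        (∀ n s j, φ n s j ∈ Set.Icc (0 : ℝ) 1) →
        (∀ n s, ∑ j, φ n s j = 1) →
        TruncatedAt ψ N →
        Lagr k θs lam K γ ϑ N (psiStar k θs lam K γ ϑ N) φs ≤
          Lagr k θs lam K γ ϑ N ψ φ := by

  have hk0 : 0 < k := by omega
  have hN1 : 1 ≤ N := by omega
  -- the optimal stopping rule is truncated at `N`
  have htr : TruncatedAt (psiStar k θs lam K γ ϑ N) N := by
    intro x
    apply Finset.prod_eq_zero (Finset.mem_range.mpr (by omega : N - 1 < N))
    have e : N - 1 + 1 = N := by omega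
    rw [e, psiStar_of_ge (lt_irrefl N), sub_self]
  -- the two `U`-values at time 1
  have hU0 : U k θs lam K γ ϑ N 1 0 = Vb k θs lam K γ ϑ N 1 0 := by
    rw [U_eq hk0 N 1 0 (by omega)]
    simp
  have hU1 : U k θs lam K γ ϑ N 1 1 = Vb k θs lam K γ ϑ N 1 1 := by
    rw [U_eq hk0 N 1 1 (by omega)]
    simp
  have hwsum : fmix K γ ϑ 1 (fun _ => false) + fmix K γ ϑ 1 (fun _ => true) = 1 := by
    rw [fmix_eq_wmix, fmix_eq_wmix, count_const_false, count_const_true]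
    exact wmix_one hγ1
  -- value of the optimal test
  have hval : Lagr k θs lam K γ ϑ N (psiStar k θs lam K γ ϑ N) φs =
      1 + U k θs lam K γ ϑ N 1 0 + U k θs lam K γ ϑ N 1 1 := by
    rw [Lagr_eq hN1, sum_fin1]
    rw [optEq hk0 hφs (N - 1) 1 (by omega), optEq hk0 hφs (N - 1) 1 (by omega)]
    rw [count_const_false, count_const_true, hU0, hU1]
    push_cast
    linarith [hwsum]
  refine ⟨htr, hval, ?_⟩
  -- optimality
  intro ψ φ hψ hφ hφ1 hTr
  rw [hval, Lagr_eq hN1 ψ φ, sum_fin1]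
  have hyp : ∀ x : Fin 1 → Bool, ∀ z : Fin N → Bool, ExtT x z →
      ∏ l ∈ Finset.Icc 1 N, (1 - ψ l (prefixCount z l)) = 0 := by
    intro x z _
    rw [prod_Icc_one]
    exact hTr z
  have hb0 := lowerB (θs := θs) (lam := lam) (γ := γ) (ϑ := ϑ) (N := N) hk0 hψ hφ hφ1 (N - 1) 1 (by omega)
    (fun _ => false) (hyp (fun _ => false))
  have hb1 := lowerB (θs := θs) (lam := lam) (γ := γ) (ϑ := ϑ) (N := N) hk0 hψ hφ hφ1 (N - 1) 1 (by omega)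
    (fun _ => true) (hyp (fun _ => true))
  rw [count_const_false] at hb0
  rw [count_const_true] at hb1
  push_cast at hb0 hb1
  linarith [hb0, hb1, hwsum, hU0.symm, hU1.symm]
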